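/- Perfect parallel repetition for SepQMA: suppose C₁ ∈ Sep(X₁,…,X_m) and C₂ ∈ Sep(Y₁,…,Y_m) are positive semidefinite with C₁ ⪯ 1 and C₂ ⪯ 1. Let v₁ = max{⟨ρ,C₁⟩ : ρ ∈ Sep(X₁,…,X_m), Tr ρ = 1} and v₂ defined analogously for C₂. Then max{⟨ρ, C₁⊗C₂⟩ : ρ ∈ Sep(X₁⊗Y₁,…,X_m⊗Y_m), Tr ρ = 1} = v₁·v₂. -/

import Mathlib

open scoped Kronecker ComplexOrder

/-- Trace norm of a complex matrix: `Tr √(Aᴴ A)`. -/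
noncomputable def traceNorm {n : Type*} [Fintype n] [DecidableEq n] (A : Matrix n n ℂ) : ℝ :=
  ((Matrix.posSemidef_conjTranspose_mul_self A).1.eigenvectorUnitary.1 *
    Matrix.diagonal (((↑) : ℝ → ℂ) ∘ (√·) ∘ (Matrix.posSemidef_conjTranspose_mul_self A).1.eigenvalues) *
    (star (Matrix.posSemidef_conjTranspose_mul_self A).1.eigenvectorUnitary : Matrix n n ℂ)).trace.re

/-- Spectral (operator) norm of a complex matrix. -/
noncomputable def opNorm {n : Type*} [Fintype n] [DecidableEq n] (A : Matrix n n ℂ) : ℝ :=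
  ‖Matrix.toEuclideanCLM (𝕜 := ℂ) A‖

/-- Tensor product of a family of `m` matrices, as a matrix on the product index. -/
noncomputable def famTensor {m : ℕ} {ι : Fin m → Type*} [∀ j, Fintype (ι j)]
    (M : ∀ j, Matrix (ι j) (ι j) ℂ) : Matrix (∀ j, ι j) (∀ j, ι j) ℂ :=
  fun x y => ∏ j, M j (x j) (y j)

/-- Full separability across the partition `ι 1, …, ι m`. -/
def IsFullySep {m : ℕ} {ι : Fin m → Type*} [∀ j, Fintype (ι j)]
    (A : Matrix (∀ j, ι j) (∀ j, ι j) ℂ) : Prop :=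
  ∃ (k : ℕ) (P : Fin k → ∀ j, Matrix (ι j) (ι j) ℂ),
    (∀ i j, (P i j).PosSemidef) ∧ A = ∑ i, famTensor (P i)

/-- Membership in the dual cone of the fully separable operators. -/
def InSepDual {m : ℕ} {ι : Fin m → Type*} [∀ j, Fintype (ι j)]
    (W : Matrix (∀ j, ι j) (∀ j, ι j) ℂ) : Prop :=
  ∀ S : Matrix (∀ j, ι j) (∀ j, ι j) ℂ, IsFullySep S → 0 ≤ ((S * W).trace).re

/-- Partial trace over the second tensor factor. -/
noncomputable def ptraceY {ι κ : Type*} [Fintype κ] (M : Matrix (ι × κ) (ι × κ) ℂ) :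
    Matrix ι ι ℂ :=
  fun i i' => ∑ k, M (i, k) (i', k)

/-- The natural identification `⨂ⱼ (Xⱼ ⊗ Yⱼ) ≃ (⨂ⱼ Xⱼ) ⊗ (⨂ⱼ Yⱼ)` on index sets. -/
def piProd {m : ℕ} (ι κ : Fin m → Type*) : (∀ j, ι j × κ j) ≃ (∀ j, ι j) × (∀ j, κ j) where
  toFun f := (fun j => (f j).1, fun j => (f j).2)
  invFun p := fun j => (p.1 j, p.2 j)
  left_inv _ := rfl
  right_inv _ := rfl

/-! ### Auxiliary lemmas -/

open Matrix

set_option linter.unusedSectionVars false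

section TraceAux
variable {n : Type*} [Fintype n]

lemma posSemidef_iff_eq_transpose_mul_self {A : Matrix n n ℂ} :
    A.PosSemidef ↔ ∃ B : Matrix n n ℂ, A = Bᴴ * B := by
  classical
  constructor
  · intro hA
    open scoped MatrixOrder in
    obtain ⟨B, rfl⟩ := CStarAlgebra.nonneg_iff_eq_star_mul_self.mp hA.nonneg
    exact ⟨B, rfl⟩
  · rintro ⟨B, rfl⟩
    exact posSemidef_conjTranspose_mul_self B

lemma trace_nonneg' {A : Matrix n n ℂ} (hA : A.PosSemidef) : 0 ≤ A.trace := by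
  classical
  apply Finset.sum_nonneg
  intro i _
  have h := hA.dotProduct_mulVec_nonneg (Pi.single i 1)
  simpa [dotProduct, Matrix.mulVec, Pi.single_apply] using h

lemma trace_real {A : Matrix n n ℂ} (hA : 0 ≤ A.trace) : A.trace = (A.trace.re : ℂ) := by
  rw [Complex.le_def] at hA
  exact (Complex.re_add_im A.trace) ▸ by simp [← hA.2, Complex.ext_iff]

lemma trace_mul_nonneg' {A B : Matrix n n ℂ} (hA : A.PosSemidef)
    (hB : B.PosSemidef) : 0 ≤ (A * B).trace := by
  obtain ⟨S, rfl⟩ := posSemidef_iff_eq_transpose_mul_self.mp hB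
  rw [← Matrix.mul_assoc, Matrix.trace_mul_comm]
  exact trace_nonneg' (by simpa [Matrix.mul_assoc] using hA.mul_mul_conjTranspose_same S)

lemma trace_mul_re_nonneg' {A B : Matrix n n ℂ} (hA : A.PosSemidef)
    (hB : B.PosSemidef) : 0 ≤ ((A * B).trace).re :=
  (Complex.le_def.mp (trace_mul_nonneg' hA hB)).1

lemma psd_eq_zero_of_trace {A : Matrix n n ℂ} (hA : A.PosSemidef)
    (h : A.trace = 0) : A = 0 := by
  obtain ⟨S, rfl⟩ := posSemidef_iff_eq_transpose_mul_self.mp hA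
  have hS : S = 0 := by
    have h1 : (Sᴴ * S).trace = ∑ i, ∑ j, (Complex.normSq (S j i) : ℂ) := by
      simp [Matrix.trace, Matrix.diag, Matrix.mul_apply, Matrix.conjTranspose_apply,
        Complex.normSq_eq_conj_mul_self]
    have htr : ∑ p : n × n, Complex.normSq (S p.1 p.2) = 0 := by
      have h2 := congrArg Complex.re (h1 ▸ h)
      rw [Fintype.sum_prod_type, Finset.sum_comm]
      simpa using h2
    ext i j
    have := (Finset.sum_eq_zero_iff_of_nonneg (fun p _ => Complex.normSq_nonneg _)).mp htr (i, j)
      (Finset.mem_univ _)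
    simpa [Complex.normSq_eq_zero] using this
  simp [hS]

lemma trace_mul_herm_real {A B : Matrix n n ℂ} (hA : A.IsHermitian) (hB : B.IsHermitian) :
    (A * B).trace = ((((A * B).trace).re : ℝ) : ℂ) := by
  have h : star ((A * B).trace) = (A * B).trace := by
    rw [← Matrix.trace_conjTranspose, Matrix.conjTranspose_mul, hA.eq, hB.eq,
      Matrix.trace_mul_comm]
  exact (Complex.conj_eq_iff_re.mp h).symm

lemma psd_smul_real {A : Matrix n n ℂ} (hA : A.PosSemidef) {c : ℝ} (hc : 0 ≤ c) :
    (((c : ℂ)) • A).PosSemidef := by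
  refine Matrix.PosSemidef.of_dotProduct_mulVec_nonneg ?_ ?_
  · ext i j
    simp [Matrix.conjTranspose_apply, hA.1.apply, Complex.conj_ofReal]
  · intro x
    have h := hA.dotProduct_mulVec_nonneg x
    have : dotProduct (star x) (((c : ℂ) • A) *ᵥ x) = (c : ℂ) * dotProduct (star x) (A *ᵥ x) := by
      simp [Matrix.smul_mulVec, dotProduct_smul, smul_eq_mul]
    rw [this]
    have hc' : (0 : ℂ) ≤ (c : ℂ) := by
      rw [Complex.le_def]; simp [hc]
    exact mul_nonneg hc' h

end TraceAux

section KronAux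
variable {a b : Type*} [Fintype a] [Fintype b]

lemma kron_conjTranspose (A : Matrix a a ℂ) (B : Matrix b b ℂ) :
    (A ⊗ₖ B)ᴴ = Aᴴ ⊗ₖ Bᴴ := by
  ext ⟨i, j⟩ ⟨k, l⟩
  simp [Matrix.conjTranspose_apply, Matrix.kroneckerMap_apply]

lemma kron_posSemidef {A : Matrix a a ℂ} {B : Matrix b b ℂ}
    (hA : A.PosSemidef) (hB : B.PosSemidef) : (A ⊗ₖ B).PosSemidef := by
  obtain ⟨S, rfl⟩ := posSemidef_iff_eq_transpose_mul_self.mp hA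
  obtain ⟨T, rfl⟩ := posSemidef_iff_eq_transpose_mul_self.mp hB
  have h : (Sᴴ * S) ⊗ₖ (Tᴴ * T) = (S ⊗ₖ T)ᴴ * (S ⊗ₖ T) := by
    rw [kron_conjTranspose, Matrix.mul_kronecker_mul]
  rw [h]
  exact posSemidef_conjTranspose_mul_self _

lemma reindex_mul' (e : a ≃ b) (A B : Matrix a a ℂ) :
    Matrix.reindex e e A * Matrix.reindex e e B = Matrix.reindex e e (A * B) := by
  simp only [Matrix.reindex_apply]
  exact Matrix.submatrix_mul_equiv A B _ _ _

lemma trace_reindex' (e : a ≃ b) (A : Matrix a a ℂ) :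
    (Matrix.reindex e e A).trace = A.trace := by
  simp only [Matrix.trace, Matrix.diag, Matrix.reindex_apply, Matrix.submatrix_apply]
  exact Fintype.sum_equiv e.symm _ _ fun i => rfl

lemma ptraceY_posSemidef {M : Matrix (a × b) (a × b) ℂ} (hM : M.PosSemidef) :
    Matrix.PosSemidef (Matrix.of fun i i' : a => ∑ k : b, M (i, k) (i', k)) := by
  classical
  refine Matrix.PosSemidef.of_dotProduct_mulVec_nonneg ?_ ?_
  · ext i i'
    simp only [Matrix.conjTranspose_apply, Matrix.of_apply, star_sum]
    refine Finset.sum_congr rfl fun k _ => ?_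
    rw [← Matrix.conjTranspose_apply, hM.1]
  · intro x
    have per : ∀ k : b, dotProduct (star fun p : a × b => if p.2 = k then x p.1 else 0)
        (M *ᵥ fun p : a × b => if p.2 = k then x p.1 else 0)
        = ∑ i, ∑ i', star (x i) * (M (i, k) (i', k) * x i') := by
      intro k
      simp only [dotProduct, Matrix.mulVec, Pi.star_apply, Fintype.sum_prod_type,
        apply_ite (star : ℂ → ℂ), star_zero, mul_ite, ite_mul, zero_mul, mul_zero,
        Finset.sum_ite_eq', Finset.mem_univ, if_true]
      simp only [Finset.mul_sum, mul_assoc]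
    have key : dotProduct (star x) ((Matrix.of fun i i' : a => ∑ k : b, M (i, k) (i', k)) *ᵥ x)
        = ∑ k : b, ∑ i, ∑ i', star (x i) * (M (i, k) (i', k) * x i') := by
      simp only [dotProduct, Matrix.mulVec, Pi.star_apply, Matrix.of_apply,
        Finset.sum_mul, Finset.mul_sum]
      rw [Finset.sum_comm]
      exact ((Finset.sum_congr rfl fun _ _ => Finset.sum_comm).trans Finset.sum_comm).trans
        (Finset.sum_congr rfl fun _ _ => Finset.sum_comm)
    rw [key]
    refine Finset.sum_nonneg fun k _ => ?_
    rw [← per k]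
    exact hM.dotProduct_mulVec_nonneg _

lemma ptraceX_posSemidef {M : Matrix (a × b) (a × b) ℂ} (hM : M.PosSemidef) :
    Matrix.PosSemidef (Matrix.of fun i i' : b => ∑ k : a, M (k, i) (k, i')) := by
  classical
  refine Matrix.PosSemidef.of_dotProduct_mulVec_nonneg ?_ ?_
  · ext i i'
    simp only [Matrix.conjTranspose_apply, Matrix.of_apply, star_sum]
    refine Finset.sum_congr rfl fun k _ => ?_
    rw [← Matrix.conjTranspose_apply, hM.1]
  · intro x
    have per : ∀ k : a, dotProduct (star fun p : a × b => if p.1 = k then x p.2 else 0)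
        (M *ᵥ fun p : a × b => if p.1 = k then x p.2 else 0)
        = ∑ i, ∑ i', star (x i) * (M (k, i) (k, i') * x i') := by
      intro k
      simp only [dotProduct, Matrix.mulVec, Pi.star_apply, Fintype.sum_prod_type,
        apply_ite (star : ℂ → ℂ), star_zero, mul_ite, ite_mul, zero_mul, mul_zero,
        Finset.sum_ite_eq', Finset.sum_ite_eq, Finset.mem_univ, if_true]
      simp [Finset.sum_ite_eq', Finset.mul_sum, mul_assoc]
    have key : dotProduct (star x) ((Matrix.of fun i i' : b => ∑ k : a, M (k, i) (k, i')) *ᵥ x)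
        = ∑ k : a, ∑ i, ∑ i', star (x i) * (M (k, i) (k, i') * x i') := by
      simp only [dotProduct, Matrix.mulVec, Pi.star_apply, Matrix.of_apply,
        Finset.sum_mul, Finset.mul_sum]
      rw [Finset.sum_comm]
      exact ((Finset.sum_congr rfl fun _ _ => Finset.sum_comm).trans Finset.sum_comm).trans
        (Finset.sum_congr rfl fun _ _ => Finset.sum_comm)
    rw [key]
    refine Finset.sum_nonneg fun k _ => ?_
    rw [← per k]
    exact hM.dotProduct_mulVec_nonneg _

end KronAux

/-! ### famTensor lemmas -/

section FamAux
variable {m : ℕ} {ι : Fin m → Type*} [∀ j, Fintype (ι j)]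

lemma famTensor_mul (P Q : ∀ j, Matrix (ι j) (ι j) ℂ) :
    famTensor P * famTensor Q = famTensor fun j => P j * Q j := by
  ext x y
  simp only [Matrix.mul_apply, famTensor,
    Fintype.prod_sum (f := fun j t => P j (x j) t * Q j t (y j))]
  exact Finset.sum_congr rfl fun z _ => (Finset.prod_mul_distrib).symm

lemma famTensor_conjTranspose (P : ∀ j, Matrix (ι j) (ι j) ℂ) :
    (famTensor P)ᴴ = famTensor fun j => (P j)ᴴ := by
  ext x y
  simp [famTensor, Matrix.conjTranspose_apply, map_prod]

lemma famTensor_posSemidef {P : ∀ j, Matrix (ι j) (ι j) ℂ} (hP : ∀ j, (P j).PosSemidef) :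
    (famTensor P).PosSemidef := by
  choose S hS using fun j => posSemidef_iff_eq_transpose_mul_self.mp (hP j)
  have : famTensor P = (famTensor S)ᴴ * famTensor S := by
    rw [famTensor_conjTranspose, famTensor_mul]
    exact congrArg famTensor (funext fun j => hS j)
  rw [this]
  exact posSemidef_conjTranspose_mul_self _

lemma famTensor_trace (P : ∀ j, Matrix (ι j) (ι j) ℂ) :
    (famTensor P).trace = ∏ j, (P j).trace := by
  simp only [Matrix.trace, Matrix.diag, famTensor]
  rw [Fintype.prod_sum (f := fun j t => P j t t)]

lemma famTensor_smul (c : Fin m → ℂ) (P : ∀ j, Matrix (ι j) (ι j) ℂ) :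
    (famTensor fun j => c j • P j) = (∏ j, c j) • famTensor P := by
  ext x y
  simp [famTensor, Finset.prod_mul_distrib, mul_comm]

lemma isFullySep_zero : IsFullySep (0 : Matrix (∀ j, ι j) (∀ j, ι j) ℂ) :=
  ⟨0, Fin.elim0, fun i => i.elim0, by simp⟩

lemma isFullySep_famTensor {P : ∀ j, Matrix (ι j) (ι j) ℂ} (hP : ∀ j, (P j).PosSemidef) :
    IsFullySep (famTensor P) :=
  ⟨1, fun _ => P, fun _ => hP, by simp⟩

lemma IsFullySep.add {A B : Matrix (∀ j, ι j) (∀ j, ι j) ℂ}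
    (hA : IsFullySep A) (hB : IsFullySep B) : IsFullySep (A + B) := by
  obtain ⟨k, P, hP, rfl⟩ := hA
  obtain ⟨k', Q, hQ, rfl⟩ := hB
  refine ⟨k + k', Fin.append P Q, fun i => ?_, ?_⟩
  · refine Fin.addCases (fun i0 j => ?_) (fun i1 j => ?_) i
    · rw [Fin.append_left]; exact hP i0 j
    · rw [Fin.append_right]; exact hQ i1 j
  · rw [Fin.sum_univ_add]
    congr 1
    · exact Finset.sum_congr rfl fun i _ => by rw [Fin.append_left]
    · exact Finset.sum_congr rfl fun i _ => by rw [Fin.append_right]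

lemma isFullySep_sum {α : Type*} (s : Finset α) (f : α → Matrix (∀ j, ι j) (∀ j, ι j) ℂ)
    (h : ∀ x ∈ s, IsFullySep (f x)) : IsFullySep (∑ x ∈ s, f x) := by
  classical
  induction s using Finset.induction with
  | empty => simpa using isFullySep_zero
  | insert _ _ hx ih =>
    rw [Finset.sum_insert hx]
    exact (h _ (Finset.mem_insert_self _ _)).add
      (ih fun x hxs => h x (Finset.mem_insert_of_mem hxs))

lemma IsFullySep.posSemidef {A : Matrix (∀ j, ι j) (∀ j, ι j) ℂ} (hA : IsFullySep A) :
    A.PosSemidef := by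
  obtain ⟨k, P, hP, rfl⟩ := hA
  exact Finset.sum_induction _ _ (fun a b ha hb => ha.add hb) Matrix.PosSemidef.zero
    fun i _ => famTensor_posSemidef (hP i)

end FamAux

/-! ### Pi/product sum helpers -/

def zipFun {m : ℕ} {ι κ : Fin m → Type*} (a : ∀ j, ι j) (b : ∀ j, κ j) :
    ∀ j, ι j × κ j := fun j => (a j, b j)

section PiSum
variable {m : ℕ} {ι κ : Fin m → Type*} [∀ j, Fintype (ι j)] [∀ j, Fintype (κ j)]

lemma sum_pi_prod (f : (∀ j, ι j × κ j) → ℂ) :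
    ∑ x, f x = ∑ a : ∀ j, ι j, ∑ b : ∀ j, κ j, f (zipFun a b) := by
  rw [← Equiv.sum_comp (piProd ι κ).symm f, Fintype.sum_prod_type]
  rfl

lemma prod_sum_sum (f : ∀ j, κ j → κ j → ℂ) :
    ∑ b : ∀ j, κ j, ∑ b' : ∀ j, κ j, ∏ j, f j (b j) (b' j) = ∏ j, ∑ y, ∑ z, f j y z := by
  have h1 : ∏ j, ∑ y, ∑ z, f j y z = ∏ j, ∑ p : κ j × κ j, f j p.1 p.2 :=
    Finset.prod_congr rfl fun j _ =>
      (Fintype.sum_prod_type (f := fun p : κ j × κ j => f j p.1 p.2)).symm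
  rw [h1, Fintype.prod_sum, sum_pi_prod (ι := κ) (κ := κ) (fun x => ∏ j, f j (x j).1 (x j).2)]
  rfl

lemma prod_sum_one (f : ∀ j, κ j → ℂ) :
    ∑ b : ∀ j, κ j, ∏ j, f j (b j) = ∏ j, ∑ y, f j y := (Fintype.prod_sum f).symm

end PiSum

/-! ### Per-term bound -/

lemma famTensor_term_bound {m : ℕ} {ι : Fin m → Type*} [∀ j, Fintype (ι j)]
    (C : Matrix (∀ j, ι j) (∀ j, ι j) ℂ) {v : ℝ}
    (hub : ∀ ρ : Matrix (∀ j, ι j) (∀ j, ι j) ℂ, IsFullySep ρ → ρ.trace = 1 →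
      ((ρ * C).trace).re ≤ v)
    {F : ∀ j, Matrix (ι j) (ι j) ℂ} (hF : ∀ j, (F j).PosSemidef) :
    ((famTensor F * C).trace).re ≤ v * ((famTensor F).trace).re := by
  by_cases hz : ∀ j, (F j).trace ≠ 0
  · set t : Fin m → ℝ := fun j => ((F j).trace).re with ht
    have htr : ∀ j, (F j).trace = ((t j : ℝ) : ℂ) := fun j => trace_real (trace_nonneg' (hF j))
    have htpos : ∀ j, 0 < t j := by
      intro j
      have h0 : (0 : ℝ) ≤ t j := by simpa using (Complex.le_def.mp (trace_nonneg' (hF j))).1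
      rcases h0.lt_or_eq with h | h
      · exact h
      · exact absurd (by rw [htr j, ← h]; simp : (F j).trace = 0) (hz j)
    set T : ℝ := ∏ j, t j with hT
    have hTpos : 0 < T := Finset.prod_pos fun j _ => htpos j
    have hprodT : ∏ j, (F j).trace = ((T : ℝ) : ℂ) := by
      rw [hT, Complex.ofReal_prod]
      exact Finset.prod_congr rfl fun j _ => htr j
    have hfam : (famTensor fun j => (((t j)⁻¹ : ℝ) : ℂ) • F j)
        = ((T⁻¹ : ℝ) : ℂ) • famTensor F := by
      rw [famTensor_smul]
      congr 1
      rw [hT, ← Finset.prod_inv_distrib, Complex.ofReal_prod]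
    have hsep' : IsFullySep (famTensor fun j => (((t j)⁻¹ : ℝ) : ℂ) • F j) :=
      isFullySep_famTensor fun j => psd_smul_real (hF j) (inv_nonneg.mpr (htpos j).le)
    have htr1 : (famTensor fun j => (((t j)⁻¹ : ℝ) : ℂ) • F j).trace = 1 := by
      rw [hfam, Matrix.trace_smul, famTensor_trace, hprodT, smul_eq_mul,
        ← Complex.ofReal_mul, inv_mul_cancel₀ hTpos.ne', Complex.ofReal_one]
    have hle := hub _ hsep' htr1
    have hre : (((famTensor fun j => (((t j)⁻¹ : ℝ) : ℂ) • F j) * C).trace).re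
        = T⁻¹ * ((famTensor F * C).trace).re := by
      rw [hfam, Matrix.smul_mul, Matrix.trace_smul, smul_eq_mul]
      simp [Complex.mul_re]
    rw [hre] at hle
    have hTre : ((famTensor F).trace).re = T := by rw [famTensor_trace, hprodT]; simp
    rw [hTre]
    have := mul_le_mul_of_nonneg_left hle hTpos.le
    calc ((famTensor F * C).trace).re = T * (T⁻¹ * ((famTensor F * C).trace).re) := by
          field_simp
      _ ≤ T * v := this
      _ = v * T := mul_comm _ _
  · push_neg at hz
    obtain ⟨j0, hj0⟩ := hz
    have hF0 : F j0 = 0 := psd_eq_zero_of_trace (hF j0) hj0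
    have hzero : famTensor F = 0 := by
      ext x y
      exact Finset.prod_eq_zero (Finset.mem_univ j0) (by simp [hF0])
    simp [hzero]
lemma F_posSemidef {a b : Type*} [Fintype a] [Fintype b] [DecidableEq a] [DecidableEq b]
    {P : Matrix (a × b) (a × b) ℂ} {Q : Matrix b b ℂ}
    (hP : P.PosSemidef) (hQ : Q.PosSemidef) :
    Matrix.PosSemidef (Matrix.of fun y y' : a => ∑ c, ∑ d, P (y, c) (y', d) * Q d c) := by
  obtain ⟨S, rfl⟩ := posSemidef_iff_eq_transpose_mul_self.mp hQ
  have key : (Matrix.of fun y y' : a => ∑ c, ∑ d, P (y, c) (y', d) * (Sᴴ * S) d c)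
      = ∑ k : b, (Matrix.of fun (p : a × b) (y : a) =>
          if p.1 = y then star (S k p.2) else 0)ᴴ * P *
          (Matrix.of fun (p : a × b) (y : a) => if p.1 = y then star (S k p.2) else 0) := by
    ext y y'
    simp only [Matrix.sum_apply, Matrix.mul_apply, Matrix.of_apply, Matrix.conjTranspose_apply,
      Fintype.sum_prod_type, apply_ite (star : ℂ → ℂ), star_zero, star_star, ite_mul, mul_ite,
      zero_mul, mul_zero, Finset.sum_ite_eq, Finset.sum_ite_eq', Finset.mem_univ, if_true]
    have hR : ∀ k : b, (∑ x1 : a, ∑ x2 : b, if x1 = y' then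
          (∑ x3 : a, ∑ x4 : b, if x3 = y then S k x4 * P (x3, x4) (x1, x2) else 0)
            * star (S k x2) else 0)
        = ∑ d : b, (∑ c : b, S k c * P (y, c) (y', d)) * star (S k d) := by
      intro k
      rw [Finset.sum_comm]
      simp only [Finset.sum_ite_eq', Finset.mem_univ, if_true]
      refine Finset.sum_congr rfl fun d _ => ?_
      congr 1
      rw [Finset.sum_comm]
      simp only [Finset.sum_ite_eq', Finset.mem_univ, if_true]
    rw [Finset.sum_congr rfl fun k _ => hR k]
    simp only [Finset.mul_sum, Finset.sum_mul]
    rw [Finset.sum_comm]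
    refine (Finset.sum_congr rfl fun d _ => Finset.sum_comm).trans ?_
    rw [Finset.sum_comm]
    refine Finset.sum_congr rfl fun k _ => Finset.sum_congr rfl fun d _ =>
      Finset.sum_congr rfl fun c _ => by ring
  rw [key]
  exact Finset.sum_induction _ _ (fun A B hA hB => hA.add hB) Matrix.PosSemidef.zero
    fun k _ => hP.conjTranspose_mul_mul_same _

/-- Perfect parallel repetition for `SepQMA`. -/
theorem sepQMA_perfect_parallel_repetition {m : ℕ} {ι κ : Fin m → Type}
    [∀ j, Fintype (ι j)] [∀ j, Fintype (κ j)]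
    [∀ j, DecidableEq (ι j)] [∀ j, DecidableEq (κ j)]
    (C₁ : Matrix (∀ j, ι j) (∀ j, ι j) ℂ) (C₂ : Matrix (∀ j, κ j) (∀ j, κ j) ℂ)
    (hC₁sep : IsFullySep C₁) (hC₂sep : IsFullySep C₂)
    (hC₁ : C₁.PosSemidef) (hC₂ : C₂.PosSemidef)
    (hC₁le : ((1 : Matrix (∀ j, ι j) (∀ j, ι j) ℂ) - C₁).PosSemidef)
    (hC₂le : ((1 : Matrix (∀ j, κ j) (∀ j, κ j) ℂ) - C₂).PosSemidef)
    (v₁ v₂ : ℝ)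
    (hv₁ : IsGreatest {x : ℝ | ∃ ρ : Matrix (∀ j, ι j) (∀ j, ι j) ℂ,
      IsFullySep ρ ∧ ρ.trace = 1 ∧ x = ((ρ * C₁).trace).re} v₁)
    (hv₂ : IsGreatest {x : ℝ | ∃ ρ : Matrix (∀ j, κ j) (∀ j, κ j) ℂ,
      IsFullySep ρ ∧ ρ.trace = 1 ∧ x = ((ρ * C₂).trace).re} v₂) :
    IsGreatest {x : ℝ | ∃ ρ : Matrix (∀ j, ι j × κ j) (∀ j, ι j × κ j) ℂ,
      IsFullySep ρ ∧ ρ.trace = 1 ∧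
      x = ((ρ * Matrix.reindex (piProd ι κ).symm (piProd ι κ).symm (C₁ ⊗ₖ C₂)).trace).re}
      (v₁ * v₂) := by
  classical
  obtain ⟨ρ₁, h1sep, h1tr, h1val⟩ := hv₁.1
  obtain ⟨ρ₂, h2sep, h2tr, h2val⟩ := hv₂.1
  have hρ₁psd := h1sep.posSemidef
  have hρ₂psd := h2sep.posSemidef
  have h1real : (ρ₁ * C₁).trace = ((v₁ : ℝ) : ℂ) := by
    rw [trace_mul_herm_real hρ₁psd.1 hC₁.1, ← h1val]
  have h2real : (ρ₂ * C₂).trace = ((v₂ : ℝ) : ℂ) := by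
    rw [trace_mul_herm_real hρ₂psd.1 hC₂.1, ← h2val]
  have hv₁nonneg : 0 ≤ v₁ := h1val ▸ trace_mul_re_nonneg' hρ₁psd hC₁
  constructor
  · -- membership : the product state achieves v₁ * v₂
    refine ⟨Matrix.reindex (piProd ι κ).symm (piProd ι κ).symm (ρ₁ ⊗ₖ ρ₂), ?_, ?_, ?_⟩
    · obtain ⟨k1, P, hP, hd1⟩ := h1sep
      obtain ⟨k2, Q, hQ, hd2⟩ := h2sep
      have hdecomp : Matrix.reindex (piProd ι κ).symm (piProd ι κ).symm (ρ₁ ⊗ₖ ρ₂)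
          = ∑ p : Fin k1 × Fin k2, famTensor (fun j => P p.1 j ⊗ₖ Q p.2 j) := by
        subst hd1 hd2
        ext f g
        simp only [Matrix.reindex_apply, Matrix.submatrix_apply, Equiv.symm_symm,
          Matrix.kroneckerMap_apply, Matrix.sum_apply, famTensor, Finset.sum_mul_sum,
          Fintype.sum_prod_type]
        refine Finset.sum_congr rfl fun i _ => Finset.sum_congr rfl fun l _ => ?_
        rw [← Finset.prod_mul_distrib]
        rfl
      rw [hdecomp]
      exact isFullySep_sum _ _ fun p _ =>
        isFullySep_famTensor fun j => kron_posSemidef (hP p.1 j) (hQ p.2 j)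
    · rw [trace_reindex', Matrix.trace_kronecker, h1tr, h2tr, one_mul]
    · rw [reindex_mul', trace_reindex', ← Matrix.mul_kronecker_mul, Matrix.trace_kronecker,
        h1real, h2real, ← Complex.ofReal_mul, Complex.ofReal_re]
  · -- upper bound
    rintro x ⟨ρ, hsep, htrρ, rfl⟩
    obtain ⟨k, P, hP, hρd⟩ := hsep
    obtain ⟨k', Q, hQ, hC₂d⟩ := hC₂sep
    set R := Matrix.reindex (piProd ι κ).symm (piProd ι κ).symm (C₁ ⊗ₖ C₂) with hR
    set σ : Matrix (∀ j, ι j) (∀ j, ι j) ℂ :=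
      Matrix.of fun a a' => ∑ b, ∑ b', ρ (zipFun a b) (zipFun a' b') * C₂ b' b with hσ
    set τ : Matrix (∀ j, κ j) (∀ j, κ j) ℂ :=
      Matrix.of fun b b' => ∑ a, ρ (zipFun a b) (zipFun a b') with hτ
    -- Step A : Tr(ρ R) = Tr(σ C₁)
    have stepA : (ρ * R).trace = (σ * C₁).trace := by
      have lhs : (ρ * R).trace = ∑ a, ∑ a', ∑ b, ∑ b',
          ρ (zipFun a b) (zipFun a' b') * (C₁ a' a * C₂ b' b) := by
        rw [Matrix.trace]
        simp only [Matrix.diag, Matrix.mul_apply]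
        rw [sum_pi_prod (fun x => ∑ y, ρ x y * R y x)]
        have hinner : ∀ a b, (∑ y, ρ (zipFun a b) y * R y (zipFun a b))
            = ∑ a', ∑ b', ρ (zipFun a b) (zipFun a' b') * (C₁ a' a * C₂ b' b) := by
          intro a b
          rw [sum_pi_prod (fun y => ρ (zipFun a b) y * R y (zipFun a b))]
          refine Finset.sum_congr rfl fun a' _ => Finset.sum_congr rfl fun b' _ => rfl
        rw [Finset.sum_congr rfl fun a _ => Finset.sum_congr rfl fun b _ => hinner a b]
        exact Finset.sum_congr rfl fun a _ => Finset.sum_comm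
      have rhs : (σ * C₁).trace = ∑ a, ∑ a', ∑ b, ∑ b',
          ρ (zipFun a b) (zipFun a' b') * (C₁ a' a * C₂ b' b) := by
        simp only [Matrix.trace, Matrix.diag, Matrix.mul_apply, hσ, Matrix.of_apply]
        refine Finset.sum_congr rfl fun a _ => Finset.sum_congr rfl fun a' _ => ?_
        rw [Finset.sum_mul]
        refine Finset.sum_congr rfl fun b _ => ?_
        rw [Finset.sum_mul]
        exact Finset.sum_congr rfl fun b' _ => by ring
      rw [lhs, rhs]
    -- Step B : Tr σ = Tr(τ C₂)
    have stepB : σ.trace = (τ * C₂).trace := by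
      have lhs : σ.trace = ∑ b, ∑ b', ∑ a,
          ρ (zipFun a b) (zipFun a b') * C₂ b' b := by
        simp only [Matrix.trace, Matrix.diag, hσ, Matrix.of_apply]
        exact Finset.sum_comm.trans (Finset.sum_congr rfl fun b _ => Finset.sum_comm)
      have rhs : (τ * C₂).trace = ∑ b, ∑ b', ∑ a,
          ρ (zipFun a b) (zipFun a b') * C₂ b' b := by
        simp only [Matrix.trace, Matrix.diag, Matrix.mul_apply, hτ, Matrix.of_apply]
        refine Finset.sum_congr rfl fun b _ => Finset.sum_congr rfl fun b' _ => ?_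
        rw [Finset.sum_mul]
      rw [lhs, rhs]
    -- Step C : Tr τ = 1
    have stepC : τ.trace = 1 := by
      rw [← htrρ]
      have : ρ.trace = ∑ a, ∑ b, ρ (zipFun a b) (zipFun a b) := by
        rw [Matrix.trace]
        exact sum_pi_prod (fun x => ρ x x)
      have h1 : τ.trace = ∑ b, ∑ a, ρ (zipFun a b) (zipFun a b) := by
        simp only [Matrix.trace, Matrix.diag, hτ, Matrix.of_apply]
      rw [h1, this]
      exact Finset.sum_comm
    -- Step D : τ is fully separable
    have hτsep : IsFullySep τ := by
      refine ⟨k, fun i j => Matrix.of fun y y' => ∑ u, P i j (u, y) (u, y'),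
        fun i j => ptraceX_posSemidef (hP i j), ?_⟩
      ext b b'
      simp only [hτ, Matrix.of_apply, hρd, Matrix.sum_apply, famTensor]
      rw [Finset.sum_comm]
      refine Finset.sum_congr rfl fun i _ => ?_
      exact prod_sum_one (fun j u => P i j (u, b j) (u, b' j))
    -- Step E : σ decomposes into fully separable pieces
    have hσdecomp : σ = ∑ p : Fin k × Fin k', famTensor (fun j =>
        Matrix.of fun y y' => ∑ c, ∑ d, P p.1 j (y, c) (y', d) * Q p.2 j d c) := by
      ext a a'
      have rhs : ∀ p : Fin k × Fin k', famTensor (fun j =>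
          Matrix.of fun y y' => ∑ c, ∑ d, P p.1 j (y, c) (y', d) * Q p.2 j d c) a a'
          = ∑ b : ∀ j, κ j, ∑ b' : ∀ j, κ j, (∏ j, P p.1 j (a j, b j) (a' j, b' j))
              * ∏ j, Q p.2 j (b' j) (b j) := by
        intro p
        show (∏ j, ∑ c, ∑ d, P p.1 j (a j, c) (a' j, d) * Q p.2 j d c) = _
        rw [← prod_sum_sum (fun j y z => P p.1 j (a j, y) (a' j, z) * Q p.2 j z y)]
        exact Finset.sum_congr rfl fun b _ => Finset.sum_congr rfl fun b' _ =>
          Finset.prod_mul_distrib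
      rw [Matrix.sum_apply, Finset.sum_congr rfl fun p _ => rhs p]
      simp only [hσ, Matrix.of_apply, hρd, hC₂d, Matrix.sum_apply, famTensor,
        Finset.sum_mul_sum]
      rw [Fintype.sum_prod_type]
      simp only [zipFun]
      exact ((Finset.sum_congr rfl fun b _ => Finset.sum_comm).trans Finset.sum_comm).trans
        (Finset.sum_congr rfl fun i _ =>
          (Finset.sum_congr rfl fun b _ => Finset.sum_comm).trans Finset.sum_comm)
    -- assemble
    have hub : ∀ ρ' : Matrix (∀ j, ι j) (∀ j, ι j) ℂ, IsFullySep ρ' → ρ'.trace = 1 →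
        ((ρ' * C₁).trace).re ≤ v₁ := fun ρ' hs ht => hv₁.2 ⟨ρ', hs, ht, rfl⟩
    have hστ : ((σ * C₁).trace).re ≤ v₁ * (σ.trace).re := by
      rw [hσdecomp, Finset.sum_mul, Matrix.trace_sum, Matrix.trace_sum, Complex.re_sum,
        Complex.re_sum, Finset.mul_sum]
      refine Finset.sum_le_sum fun p _ => ?_
      exact famTensor_term_bound C₁ hub fun j => F_posSemidef (hP p.1 j) (hQ p.2 j)
    have hτv₂ : ((τ * C₂).trace).re ≤ v₂ := hv₂.2 ⟨τ, hτsep, stepC, rfl⟩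
    calc ((ρ * R).trace).re = ((σ * C₁).trace).re := by rw [stepA]
      _ ≤ v₁ * (σ.trace).re := hστ
      _ = v₁ * ((τ * C₂).trace).re := by rw [stepB]
      _ ≤ v₁ * v₂ := mul_le_mul_of_nonneg_left hτv₂ hv₁nonneg
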